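/- For every ε ∈ (0, 1/3], δ > 0, and K ≥ 1 there exists n₀ (depending only on ε, δ, K) such that the following holds for all n ≥ n₀. Let H be a connected graph on n vertices with e(H) ≤ (1+ε)·n such that (i) every vertex set S satisfies e_H(S) ≤ 3·|S|, and (ii) every vertex set S that is connected in H and satisfies K·log n ≤ |S| ≤ 3n/4 has |∂_H S| ≥ δ·|S|. Then the diameter of H is at most 2·(K + 1/log(1+δ/3))·log n. -/

import Mathlib

/-- `edgeBdry H S` is the set of edges of `H` with exactly one endpoint in `S`. -/
def edgeBdry {V : Type*} (H : SimpleGraph V) (S : Set V) : Set (Sym2 V) :=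
  {e | e ∈ H.edgeSet ∧ ∃ u v, e = s(u, v) ∧ u ∈ S ∧ v ∉ S}

/-- `eIn H S` is the number of edges of `H` with both endpoints in `S`. -/
noncomputable def eIn {V : Type*} (H : SimpleGraph V) (S : Set V) : ℕ :=
  {e ∈ H.edgeSet | ∀ v ∈ e, v ∈ S}.ncard

open SimpleGraph

set_option linter.unusedSectionVars false
set_option maxHeartbeats 1000000

section helpers

variable {V : Type} [Fintype V]

lemma exists_adj_dist (H : SimpleGraph V) (hc : H.Connected) {x v : V} {d : ℕ}
    (h : H.dist x v = d + 1) : ∃ w, H.Adj w v ∧ H.dist x w = d := by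
  obtain ⟨p, hp⟩ := hc.exists_walk_length_eq_dist v x
  rw [SimpleGraph.dist_comm, h] at hp
  cases p with
  | nil => simp at hp
  | @cons _ w _ a r =>
    refine ⟨w, a.symm, le_antisymm ?_ ?_⟩
    · have := SimpleGraph.dist_le r.reverse
      rw [SimpleGraph.Walk.length_reverse] at this
      simp at hp
      omega
    · have h1 : H.dist x v ≤ H.dist x w + H.dist w v := hc.dist_triangle
      have h2 : H.dist w v = 1 := SimpleGraph.dist_eq_one_iff_adj.mpr a.symm
      omega

def gball (H : SimpleGraph V) (x : V) (t : ℕ) : Set V := {v | H.dist x v ≤ t}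

lemma x_mem_gball (H : SimpleGraph V) (x : V) (t : ℕ) : x ∈ gball H x t := by
  show H.dist x x ≤ t
  simp [SimpleGraph.dist_self]

lemma gball_mono (H : SimpleGraph V) (x : V) {t t' : ℕ} (h : t ≤ t') :
    gball H x t ⊆ gball H x t' := fun v hv => le_trans hv h

lemma gball_grow (H : SimpleGraph V) (hc : H.Connected) (x : V) (t : ℕ)
    (h : gball H x t ≠ Set.univ) : ∃ v, v ∈ gball H x (t+1) ∧ v ∉ gball H x t := by
  have hne : (gball H x t)ᶜ.Nonempty := by
    rw [Set.nonempty_compl]; exact h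
  obtain ⟨v, hv, hmin⟩ := Set.exists_min_image _ (H.dist x) (Set.toFinite _) hne
  have hdv : t + 1 ≤ H.dist x v := by
    have : ¬ (H.dist x v ≤ t) := hv
    omega
  obtain ⟨d, hd⟩ : ∃ d, H.dist x v = d + 1 := ⟨H.dist x v - 1, by omega⟩
  obtain ⟨w, haw, hdw⟩ := exists_adj_dist H hc hd
  have hwball : w ∈ gball H x t := by
    by_contra hw
    have := hmin w hw
    omega
  have hwt : H.dist x w ≤ t := hwball
  refine ⟨v, ?_, hv⟩
  show H.dist x v ≤ t + 1
  omega

lemma gball_card (H : SimpleGraph V) (hc : H.Connected) (x : V) (t : ℕ)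
    (h : ∀ i, i < t → gball H x i ≠ Set.univ) : t + 1 ≤ (gball H x t).ncard := by
  induction t with
  | zero =>
    have : x ∈ gball H x 0 := x_mem_gball H x 0
    have := Set.ncard_pos (Set.toFinite _) |>.mpr ⟨x, this⟩
    omega
  | succ t ih =>
    have h1 := ih (fun i hi => h i (by omega))
    obtain ⟨v, hv1, hv2⟩ := gball_grow H hc x t (h t (by omega))
    have hss : gball H x t ⊂ gball H x (t+1) :=
      ⟨gball_mono H x (by omega), fun hsub => hv2 (hsub hv1)⟩
    have := Set.ncard_lt_ncard hss (Set.toFinite _)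
    omega

lemma gball_connected (H : SimpleGraph V) (hc : H.Connected) (x : V) (t : ℕ) :
    (H.induce (gball H x t)).Connected := by
  have hx : x ∈ gball H x t := x_mem_gball H x t
  rw [SimpleGraph.connected_iff]
  refine ⟨?_, ⟨⟨x, hx⟩⟩⟩
  have key : ∀ d, ∀ v, ∀ hv : v ∈ gball H x t, H.dist x v = d →
      (H.induce (gball H x t)).Reachable ⟨v, hv⟩ ⟨x, hx⟩ := by
    intro d
    induction d with
    | zero =>
      intro v hv h0
      have hxv : x = v := (hc.dist_eq_zero_iff).mp h0
      subst hxv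
      exact Reachable.refl _
    | succ d ih =>
      intro v hv h
      obtain ⟨w, haw, hdw⟩ := exists_adj_dist H hc h
      have hwball : w ∈ gball H x t := by
        show H.dist x w ≤ t
        have : H.dist x v ≤ t := hv
        omega
      have hadj : (H.induce (gball H x t)).Adj ⟨v, hv⟩ ⟨w, hwball⟩ := haw.symm
      exact hadj.reachable.trans (ih w hwball hdw)
  intro a b
  obtain ⟨va, hva⟩ := a
  obtain ⟨vb, hvb⟩ := b
  exact (key _ va hva rfl).trans (key _ vb hvb rfl).symm

lemma eIn_step (H : SimpleGraph V) (hc : H.Connected) (x : V) (t : ℕ) :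
    eIn H (gball H x t) + (edgeBdry H (gball H x t)).ncard
      ≤ eIn H (gball H x (t+1)) := by
  set S := gball H x t with hS
  set S' := gball H x (t+1) with hS'
  set A : Set (Sym2 V) := {e ∈ H.edgeSet | ∀ v ∈ e, v ∈ S} with hA
  set B : Set (Sym2 V) := {e ∈ H.edgeSet | ∀ v ∈ e, v ∈ S'} with hB
  set E : Set (Sym2 V) := edgeBdry H S with hE
  have hdisj : Disjoint A E := by
    rw [Set.disjoint_left]
    rintro e ⟨he, hall⟩ ⟨-, u, v, rfl, hu, hv⟩
    exact hv (hall v (Sym2.mem_mk_right u v))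
  have hsub : A ∪ E ⊆ B := by
    rintro e (⟨he, hall⟩ | ⟨he, u, v, rfl, hu, hv⟩)
    · exact ⟨he, fun w hw => gball_mono H x (by omega) (hall w hw)⟩
    · refine ⟨he, fun w hw => ?_⟩
      rw [Sym2.mem_iff] at hw
      have hadj : H.Adj u v := H.mem_edgeSet.mp he
      have hdu : H.dist x u ≤ t := hu
      have hdv : H.dist x v ≤ t + 1 := by
        have h1 : H.dist x v ≤ H.dist x u + H.dist u v := hc.dist_triangle
        have h2 : H.dist u v = 1 := SimpleGraph.dist_eq_one_iff_adj.mpr hadj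
        omega
      rcases hw with rfl | rfl
      · exact le_trans hdu (by omega)
      · exact hdv
  calc A.ncard + E.ncard = (A ∪ E).ncard :=
        (Set.ncard_union_eq hdisj (Set.toFinite _) (Set.toFinite _)).symm
    _ ≤ B.ncard := Set.ncard_le_ncard hsub (Set.toFinite _)

end helpers

/-- Deterministic diameter bound: a connected `n`-vertex graph `H` with at most `(1+ε)·n`
edges, in which every set spans at most `3|S|` edges and every connected set of size
between `K·log n` and `3n/4` has edge boundary at least `δ|S|`, has diameter at most
`2·(K + 1/log(1 + δ/3))·log n`. -/
theorem diameter_from_edge_expansion (ε δ K : ℝ) (hε0 : 0 < ε) (hε : ε ≤ 1 / 3)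
    (hδ : 0 < δ) (hK : 1 ≤ K) : ∃ n₀ : ℕ, ∀ n : ℕ, n₀ ≤ n →
      ∀ {V : Type} [Fintype V], Fintype.card V = n →
        ∀ H : SimpleGraph V, H.Connected →
          ((H.edgeSet.ncard : ℝ) ≤ (1 + ε) * n) →
          (∀ S : Set V, (eIn H S : ℝ) ≤ 3 * S.ncard) →
          (∀ S : Set V, (H.induce S).Connected →
            K * Real.log n ≤ (S.ncard : ℝ) → (S.ncard : ℝ) ≤ 3 * n / 4 →
            δ * S.ncard ≤ ((edgeBdry H S).ncard : ℝ)) →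
          ∀ u w : V, (H.dist u w : ℝ) ≤
            2 * (K + 1 / Real.log (1 + δ / 3)) * Real.log n := by
  set lam : ℝ := 1 + δ / 3 with hlam_def
  have hlam1 : 1 < lam := by simp [hlam_def]; positivity
  have hlam0 : 0 < lam := by linarith
  set L : ℝ := Real.log lam with hL_def
  have hL : 0 < L := Real.log_pos hlam1
  refine ⟨⌈Real.exp (Real.exp (4*L + Real.log (9/(4*δ)) + 1))⌉₊ + ⌈(8*δ*K/9)^2⌉₊ + 3, ?_⟩
  intro n hn V _ hcard H hc hEdges h2 h3 u w
  -- basic facts about n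
  have hn3 : (3:ℕ) ≤ n := by omega
  have hn3R : (3:ℝ) ≤ (n:ℝ) := by exact_mod_cast hn3
  have hn0R : (0:ℝ) < (n:ℝ) := by linarith
  have hlogn1 : 1 ≤ Real.log n := by
    rw [Real.le_log_iff_exp_le hn0R]
    calc Real.exp 1 ≤ 2.7182818286 := (Real.exp_one_lt_d9).le
      _ ≤ 3 := by norm_num
      _ ≤ (n:ℝ) := hn3R
  have hlogn0 : 0 < Real.log n := by linarith
  have hKlogn : 0 < K * Real.log n := by positivity
  have hloglog : 4*L + Real.log (9/(4*δ)) + 1 ≤ Real.log (Real.log n) := by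
    have h1 : Real.exp (Real.exp (4*L + Real.log (9/(4*δ)) + 1)) ≤ (n:ℝ) := by
      calc Real.exp (Real.exp (4*L + Real.log (9/(4*δ)) + 1))
          ≤ (⌈Real.exp (Real.exp (4*L + Real.log (9/(4*δ)) + 1))⌉₊ : ℝ) := Nat.le_ceil _
        _ ≤ (n:ℝ) := by exact_mod_cast le_trans (by omega) hn
    rw [Real.le_log_iff_exp_le hlogn0, Real.le_log_iff_exp_le hn0R]
    exact h1
  have hsqrt : 4*δ*(K*Real.log n) ≤ 9*(n:ℝ) := by
    have hs : (8*δ*K/9)^2 ≤ (n:ℝ) := by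
      calc (8*δ*K/9)^2 ≤ (⌈(8*δ*K/9)^2⌉₊ : ℝ) := Nat.le_ceil _
        _ ≤ (n:ℝ) := by exact_mod_cast le_trans (by omega) hn
    have hsqn : 8*δ*K/9 ≤ Real.sqrt n := by
      rw [show (8*δ*K/9 : ℝ) = Real.sqrt ((8*δ*K/9)^2) from (Real.sqrt_sq (by positivity)).symm]
      exact Real.sqrt_le_sqrt hs
    have hlog_sqrt : Real.log n ≤ 2 * Real.sqrt n := by
      have h1 : Real.log n = 2 * Real.log (Real.sqrt n) := by
        rw [Real.log_sqrt (le_of_lt hn0R)]; ring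
      have h2' : Real.log (Real.sqrt n) ≤ Real.sqrt n - 1 :=
        Real.log_le_sub_one_of_pos (Real.sqrt_pos.mpr hn0R)
      nlinarith [Real.sqrt_nonneg (n:ℝ)]
    have hsq : Real.sqrt n * Real.sqrt n = (n:ℝ) := Real.mul_self_sqrt (le_of_lt hn0R)
    nlinarith [Real.sqrt_nonneg (n:ℝ)]
  -- parameters
  set t₀ : ℕ := ⌈K * Real.log n⌉₊ with ht₀_def
  set x : ℝ := Real.log (9*n/(4*δ*(K*Real.log n))) with hx_def
  have hx0 : 0 ≤ x := by
    apply Real.log_nonneg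
    rw [le_div_iff₀ (by positivity)]
    linarith
  set T : ℕ := 2 + ⌈x/L⌉₊ with hT_def
  set r : ℕ := t₀ + T with hr_def
  -- key claim
  have key : ∀ y : V, (3*(n:ℝ)/4) < ((gball H y r).ncard : ℝ) := by
    intro y
    by_cases hex : ∃ i, i ≤ r ∧ (3*(n:ℝ)/4) < ((gball H y i).ncard : ℝ)
    · obtain ⟨i, hi, hbig⟩ := hex
      have := Set.ncard_le_ncard (gball_mono H y hi) (Set.toFinite _)
      have : ((gball H y i).ncard : ℝ) ≤ ((gball H y r).ncard : ℝ) := by exact_mod_cast this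
      linarith
    · exfalso
      push_neg at hex
      have P : ∀ i, i ≤ r → ((gball H y i).ncard : ℝ) ≤ 3*(n:ℝ)/4 := hex
      have hne_univ : ∀ i, i ≤ r → gball H y i ≠ Set.univ := by
        intro i hi hcon
        have h1 := P i hi
        rw [hcon] at h1
        rw [Set.ncard_univ, Nat.card_eq_fintype_card, hcard] at h1
        linarith
      have hbt₀ : K * Real.log n ≤ ((gball H y t₀).ncard : ℝ) := by
        have h1 : t₀ + 1 ≤ (gball H y t₀).ncard :=
          gball_card H hc y t₀ (fun i hi => hne_univ i (by omega))
        have h2' : K * Real.log n ≤ (t₀ : ℝ) := Nat.le_ceil _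
        have h3' : ((t₀:ℕ) : ℝ) + 1 ≤ ((gball H y t₀).ncard : ℝ) := by exact_mod_cast h1
        linarith
      have hbmono : ∀ i, t₀ ≤ i → i ≤ r → K * Real.log n ≤ ((gball H y i).ncard : ℝ) := by
        intro i h1 h2'
        have := Set.ncard_le_ncard (gball_mono H y h1) (Set.toFinite _)
        have : ((gball H y t₀).ncard : ℝ) ≤ ((gball H y i).ncard : ℝ) := by exact_mod_cast this
        linarith
      -- boundary lower bound in the regime
      have hregime : ∀ i, t₀ ≤ i → i ≤ r →
          δ * ((gball H y i).ncard : ℝ) ≤ ((edgeBdry H (gball H y i)).ncard : ℝ) := by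
        intro i h1 h2'
        apply h3 _ (gball_connected H hc y i) (hbmono i h1 h2')
        have := P i h2'
        linarith
      -- partial sums
      set s : ℕ → ℝ := fun k => ∑ i ∈ Finset.range k, ((gball H y (t₀ + i)).ncard : ℝ)
        with hs_def
      have hs_succ : ∀ k, s (k+1) = s k + ((gball H y (t₀ + k)).ncard : ℝ) := by
        intro k
        simp [hs_def, Finset.sum_range_succ]
      have msum : ∀ k, k ≤ T → δ * s k ≤ ((eIn H (gball H y (t₀ + k)) : ℕ) : ℝ) := by
        intro k
        induction k with
        | zero => intro _; simp [hs_def]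
        | succ k ih =>
          intro hk
          have ihk := ih (by omega)
          have hstep := eIn_step H hc y (t₀ + k)
          have hstepR : ((eIn H (gball H y (t₀ + k)) : ℕ) : ℝ)
              + ((edgeBdry H (gball H y (t₀ + k))).ncard : ℝ)
              ≤ ((eIn H (gball H y (t₀ + k + 1)) : ℕ) : ℝ) := by exact_mod_cast hstep
          have hbd := hregime (t₀ + k) (by omega) (by omega)
          have : t₀ + (k+1) = t₀ + k + 1 := by omega
          rw [this, hs_succ]
          linarith
      have blow : ∀ k, k ≤ T → (δ/3) * s k ≤ ((gball H y (t₀ + k)).ncard : ℝ) := by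
        intro k hk
        have h1 := msum k hk
        have h2' := h2 (gball H y (t₀ + k))
        linarith
      have sgeom : ∀ j, j + 1 ≤ T → K * Real.log n * lam^j ≤ s (j+1) := by
        intro j
        induction j with
        | zero =>
          intro _
          have : s 1 = ((gball H y t₀).ncard : ℝ) := by
            rw [hs_succ 0]; simp [hs_def]
          rw [this]
          simpa using hbt₀
        | succ j ih =>
          intro hj
          have ihj := ih (by omega)
          have hb := blow (j+1) (by omega)
          have hsnn : 0 ≤ s (j+1) := by
            apply Finset.sum_nonneg
            intro i _
            positivity
          have h1 : lam * s (j+1) ≤ s (j+2) := by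
            rw [hs_succ (j+1)]
            have heq : lam * s (j+1) = s (j+1) + (δ/3) * s (j+1) := by
              rw [hlam_def]; ring
            rw [heq]
            have hbb : (δ/3) * s (j+1) ≤ ((gball H y (t₀ + (j+1))).ncard : ℝ) := hb
            linarith
          calc K * Real.log n * lam^(j+1) = lam * (K * Real.log n * lam^j) := by ring
            _ ≤ lam * s (j+1) := by
                apply mul_le_mul_of_nonneg_left ihj (le_of_lt hlam0)
            _ ≤ s (j+2) := h1
      -- final contradiction
      have hT1 : T = (1 + ⌈x/L⌉₊) + 1 := by omega
      have hsT : K * Real.log n * lam^(1 + ⌈x/L⌉₊) ≤ s T := by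
        rw [hT1]
        exact sgeom _ (by omega)
      have hbr := blow T (le_refl T)
      have hlampow : (9*(n:ℝ)/(4*δ*(K*Real.log n))) * lam ≤ lam^(1 + ⌈x/L⌉₊) := by
        have h1 : lam^(⌈x/L⌉₊) = Real.exp ((⌈x/L⌉₊ : ℝ) * L) := by
          rw [hL_def, mul_comm, Real.exp_mul, Real.exp_log hlam0]
          norm_num
        have h2' : Real.exp x ≤ Real.exp ((⌈x/L⌉₊ : ℝ) * L) := by
          apply Real.exp_le_exp.mpr
          have := Nat.le_ceil (x/L)
          calc x = (x/L) * L := by field_simp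
            _ ≤ (⌈x/L⌉₊ : ℝ) * L := by
                apply mul_le_mul_of_nonneg_right this (le_of_lt hL)
        have h3'' : Real.exp x = 9*(n:ℝ)/(4*δ*(K*Real.log n)) := by
          rw [hx_def, Real.exp_log (by positivity)]
        calc (9*(n:ℝ)/(4*δ*(K*Real.log n))) * lam
            = Real.exp x * lam := by rw [h3'']
          _ ≤ Real.exp ((⌈x/L⌉₊ : ℝ) * L) * lam := by
              apply mul_le_mul_of_nonneg_right h2' (le_of_lt hlam0)
          _ = lam^(⌈x/L⌉₊) * lam := by rw [h1]
          _ = lam^(1 + ⌈x/L⌉₊) := by rw [add_comm 1, pow_succ]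
      have hfinal : 3*(n:ℝ)/4 < ((gball H y (t₀ + T)).ncard : ℝ) := by
        have h1 : (δ/3) * (K * Real.log n * ((9*(n:ℝ)/(4*δ*(K*Real.log n))) * lam))
            ≤ (δ/3) * s T := by
          apply mul_le_mul_of_nonneg_left _ (by positivity)
          calc K * Real.log n * ((9*(n:ℝ)/(4*δ*(K*Real.log n))) * lam)
              ≤ K * Real.log n * lam^(1 + ⌈x/L⌉₊) := by
                apply mul_le_mul_of_nonneg_left hlampow (le_of_lt hKlogn)
            _ ≤ s T := hsT
        have h2'' : (δ/3) * (K * Real.log n * ((9*(n:ℝ)/(4*δ*(K*Real.log n))) * lam))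
            = (3*(n:ℝ)/4) * lam := by
          field_simp
          ring
        have h3''' : (3*(n:ℝ)/4) * lam > 3*(n:ℝ)/4 := by
          have : 3*(n:ℝ)/4 > 0 := by positivity
          nlinarith
        calc 3*(n:ℝ)/4 < (3*(n:ℝ)/4) * lam := h3'''
          _ ≤ (δ/3) * s T := by rw [← h2'']; exact h1
          _ ≤ ((gball H y (t₀ + T)).ncard : ℝ) := hbr
      have hPr := P r (le_refl r)
      linarith [hfinal, hPr]
  -- intersection of the two balls
  have hu := key u
  have hw := key w
  have hinter : ((gball H u r) ∩ (gball H w r)).Nonempty := by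
    rw [Set.nonempty_iff_ne_empty]
    intro hemp
    have hsum := Set.ncard_union_add_ncard_inter (gball H u r) (gball H w r)
      (Set.toFinite _) (Set.toFinite _)
    have hun : (gball H u r ∪ gball H w r).ncard ≤ n := by
      rw [← hcard]
      calc (gball H u r ∪ gball H w r).ncard ≤ (Set.univ : Set V).ncard :=
            Set.ncard_le_ncard (Set.subset_univ _) (Set.toFinite _)
        _ = Fintype.card V := by rw [Set.ncard_univ, Nat.card_eq_fintype_card]
    rw [hemp, Set.ncard_empty] at hsum
    have hsumR : ((gball H u r).ncard : ℝ) + ((gball H w r).ncard : ℝ) ≤ (n:ℝ) := by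
      have h1 : (gball H u r).ncard + (gball H w r).ncard ≤ n := by omega
      exact_mod_cast h1
    linarith
  obtain ⟨z, hzu, hzw⟩ := hinter
  have hdist : H.dist u w ≤ 2 * r := by
    calc H.dist u w ≤ H.dist u z + H.dist z w := hc.dist_triangle
      _ ≤ r + r := by
          have h1 : H.dist u z ≤ r := hzu
          have h2' : H.dist z w ≤ r := by
            rw [SimpleGraph.dist_comm]; exact hzw
          omega
      _ = 2 * r := by omega
  -- final arithmetic bound on r
  have ht₀R : (t₀ : ℝ) ≤ K * Real.log n + 1 :=
    le_of_lt (Nat.ceil_lt_add_one (by positivity))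
  have hTR : (T : ℝ) ≤ 3 + x/L := by
    have h1 : (⌈x/L⌉₊ : ℝ) ≤ x/L + 1 := le_of_lt (Nat.ceil_lt_add_one (by positivity))
    have h2' : (T : ℝ) = 2 + (⌈x/L⌉₊ : ℝ) := by
      rw [hT_def]; push_cast; ring
    linarith
  have hxbound : 4*L + x ≤ Real.log n := by
    have hxle : x ≤ Real.log (9/(4*δ)) + Real.log n - Real.log (Real.log n) := by
      have harg : 9*(n:ℝ)/(4*δ*(K*Real.log n)) ≤ 9*(n:ℝ)/(4*δ*Real.log n) := by
        apply div_le_div_of_nonneg_left (by positivity) (by positivity)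
        have : Real.log n ≤ K * Real.log n := by nlinarith
        nlinarith
      have h1 : x ≤ Real.log (9*(n:ℝ)/(4*δ*Real.log n)) := by
        rw [hx_def]
        exact Real.log_le_log (by positivity) harg
      have h2' : Real.log (9*(n:ℝ)/(4*δ*Real.log n))
          = Real.log (9/(4*δ)) + Real.log n - Real.log (Real.log n) := by
        rw [show (9*(n:ℝ)/(4*δ*Real.log n)) = (9/(4*δ)) * (n:ℝ) / Real.log n by ring,
          Real.log_div (by positivity) (by positivity),
          Real.log_mul (by positivity) (by positivity)]
      linarith
    linarith [hloglog]
  have hrR : (r : ℝ) ≤ (K + 1/L) * Real.log n := by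
    have h1 : (r : ℝ) = (t₀ : ℝ) + (T : ℝ) := by rw [hr_def]; push_cast; ring
    have h2' : (K + 1/L) * Real.log n = K * Real.log n + Real.log n / L := by
      field_simp
    have h3'' : 4 + x/L ≤ Real.log n / L := by
      have heq : 4 + x/L = (4*L + x)/L := by field_simp
      rw [heq]
      gcongr
    linarith
  calc (H.dist u w : ℝ) ≤ (2 * r : ℕ) := by exact_mod_cast hdist
    _ ≤ 2 * ((K + 1/L) * Real.log n) := by
        push_cast
        linarith
    _ = 2 * (K + 1 / Real.log (1 + δ / 3)) * Real.log n := by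
        rw [hL_def, hlam_def]; ring
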